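/- Fix (ξ,η) ∈ ℂ² and a tangent vector (u,v) ∈ ℂ². Define the real vectors X₂ = 2Re[(√2·u/(1+|ξ|²))·e₊(ξ)] and X₁ = 2Re[(√2/(1+|ξ|²))·(v − 2·conj(ξ)·η·u/(1+|ξ|²))·e₊(ξ)] in ℝ³ (real part taken componentwise), so that X(r) = X₁ + r·X₂ is the Jacobi field orthogonal to the line corresponding to (u,v). Then q_{(ξ,η)}(u,v) = ⟨X₁ × X₂, e₀(ξ)⟩, i.e. the G-length of the tangent vector equals the angular momentum of the associated Jacobi field about the line, where × is the cross product and ⟨·,·⟩ the Euclidean inner product on ℝ³. -/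

import Mathlib

open Complex ComplexConjugate Matrix

/-- The neutral Kähler metric on the space `𝕋 ≅ ℂ²` of oriented lines, as a real
quadratic form on the tangent vector `(u,v)` at the point `(ξ,η)`. -/
noncomputable def q (ξ η : ℂ) (u v : ℂ) : ℝ :=
  -4 * (v * conj u).im / (1 + normSq ξ) ^ 2 -
    8 * (ξ * conj η).im * normSq u / (1 + normSq ξ) ^ 3

/-- The unit direction vector `e₀(ξ) ∈ ℝ³`. -/
noncomputable def e0R (ξ : ℂ) : Fin 3 → ℝ :=
  ![2 * ξ.re / (1 + normSq ξ), 2 * ξ.im / (1 + normSq ξ),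
    (1 - normSq ξ) / (1 + normSq ξ)]

/-- The complex null vector `e₊(ξ) ∈ ℂ³`. -/
noncomputable def ePlus (ξ : ℂ) : Fin 3 → ℂ :=
  ![(1 - conj ξ ^ 2) / ((Real.sqrt 2 * (1 + normSq ξ) : ℝ) : ℂ),
    -I * (1 + conj ξ ^ 2) / ((Real.sqrt 2 * (1 + normSq ξ) : ℝ) : ℂ),
    -2 * conj ξ / ((Real.sqrt 2 * (1 + normSq ξ) : ℝ) : ℂ)]

noncomputable def nv (ξ : ℂ) : Fin 3 → ℂ :=
  ![1 - conj ξ ^ 2, -I * (1 + conj ξ ^ 2), -2 * conj ξ]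

lemma key_div (s D w n : ℂ) (hs : s ≠ 0) (hD : D ≠ 0) :
    (s * w / D) * (n / (s * D)) = w * n / D ^ 2 := by
  field_simp

lemma ePlus_eq (ξ : ℂ) (w : ℂ) (i : Fin 3) :
    (((Real.sqrt 2 : ℝ) : ℂ) * w / ((1 + normSq ξ : ℝ) : ℂ)) * ePlus ξ i
      = w * nv ξ i / ((1 + normSq ξ : ℝ) : ℂ) ^ 2 := by
  have hs0 : ((Real.sqrt 2 : ℝ) : ℂ) ≠ 0 :=
    Complex.ofReal_ne_zero.mpr (ne_of_gt (Real.sqrt_pos.mpr (by norm_num)))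
  have hd0 : ((1 + normSq ξ : ℝ) : ℂ) ≠ 0 :=
    Complex.ofReal_ne_zero.mpr (by nlinarith [normSq_nonneg ξ])
  fin_cases i <;>
    simp only [ePlus, nv, Complex.ofReal_mul, Matrix.cons_val_zero, Matrix.cons_val_one,
      Matrix.head_cons, Matrix.cons_val_two, Matrix.tail_cons] <;>
    exact key_div _ _ _ _ hs0 hd0

set_option maxHeartbeats 2000000 in
lemma cross_nv (ξ α β : ℂ) :
    crossProduct (fun i => 2 * (α * nv ξ i / ((1 + normSq ξ : ℝ) : ℂ) ^ 2).re)
        (fun i => 2 * (β * nv ξ i / ((1 + normSq ξ : ℝ) : ℂ) ^ 2).re) ⬝ᵥ e0R ξ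
      = -4 * (α * conj β).im / (1 + normSq ξ) ^ 2 := by
  simp only [← Complex.ofReal_pow, Complex.div_ofReal_re]
  obtain ⟨a, b⟩ := ξ; obtain ⟨p, r⟩ := α; obtain ⟨w, z⟩ := β
  have hd : (1 : ℝ) + (a * a + b * b) ≠ 0 := by nlinarith
  simp only [e0R, nv, cross_apply, dotProduct, Fin.sum_univ_three,
    Matrix.cons_val_zero, Matrix.cons_val_one, Matrix.head_cons, Matrix.cons_val_two,
    Matrix.tail_cons, Matrix.of_apply, Matrix.cons_val', Matrix.empty_val',
    Matrix.cons_val_fin_one,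
    Complex.normSq_mk, Complex.mul_re, Complex.mul_im,
    Complex.add_re, Complex.add_im, Complex.sub_re, Complex.sub_im, Complex.neg_re,
    Complex.neg_im, Complex.one_re, Complex.one_im, Complex.I_re, Complex.I_im,
    Complex.conj_re, Complex.conj_im, Complex.re_ofNat, Complex.im_ofNat, pow_two]
  field_simp
  ring

/-- the `G`-length of a tangent vector `(u,v)` at `(ξ,η)` equals the
angular momentum `⟨X₁ × X₂, e₀(ξ)⟩` of the associated orthogonal Jacobi field
`X(r) = X₁ + r·X₂` about the line. -/
theorem metric_is_angular_momentum (ξ η u v : ℂ)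
    (X₂ : Fin 3 → ℝ)
    (hX₂ : X₂ = fun i =>
      2 * ((((Real.sqrt 2 : ℝ) : ℂ) * u / ((1 + normSq ξ : ℝ) : ℂ)) * ePlus ξ i).re)
    (X₁ : Fin 3 → ℝ)
    (hX₁ : X₁ = fun i =>
      2 * ((((Real.sqrt 2 / (1 + normSq ξ) : ℝ) : ℂ)) *
        (v - 2 * conj ξ * η * u / ((1 + normSq ξ : ℝ) : ℂ)) * ePlus ξ i).re) :
    q ξ η u v = crossProduct X₁ X₂ ⬝ᵥ e0R ξ := by
  have hd : (0:ℝ) < 1 + normSq ξ := by nlinarith [normSq_nonneg ξ]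
  have hd0 : ((1 + normSq ξ : ℝ) : ℂ) ≠ 0 := Complex.ofReal_ne_zero.mpr (ne_of_gt hd)
  have hX₂' : X₂ = fun i => 2 * (u * nv ξ i / ((1 + normSq ξ : ℝ) : ℂ) ^ 2).re := by
    rw [hX₂]; funext i; rw [ePlus_eq]
  have hX₁' : X₁ = fun i =>
      2 * ((v - 2 * conj ξ * η * u / ((1 + normSq ξ : ℝ) : ℂ)) * nv ξ i
        / ((1 + normSq ξ : ℝ) : ℂ) ^ 2).re := by
    rw [hX₁]; funext i
    rw [show (((Real.sqrt 2 / (1 + normSq ξ) : ℝ) : ℂ)) *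
        (v - 2 * conj ξ * η * u / ((1 + normSq ξ : ℝ) : ℂ)) * ePlus ξ i
      = (((Real.sqrt 2 : ℝ) : ℂ) *
        (v - 2 * conj ξ * η * u / ((1 + normSq ξ : ℝ) : ℂ)) / ((1 + normSq ξ : ℝ) : ℂ))
        * ePlus ξ i by push_cast; ring, ePlus_eq]
  rw [hX₁', hX₂', cross_nv]
  have h1 : (v - 2 * conj ξ * η * u / ((1 + normSq ξ : ℝ) : ℂ)) * conj u
      = v * conj u - conj (ξ * conj η) *
          ((2 * normSq u / (1 + normSq ξ) : ℝ) : ℂ) := by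
    simp only [_root_.map_mul, Complex.conj_conj]
    push_cast
    field_simp
    rw [← Complex.mul_conj u]
    ring
  rw [h1]
  have h2 : (v * conj u - conj (ξ * conj η) *
        ((2 * normSq u / (1 + normSq ξ) : ℝ) : ℂ)).im
      = (v * conj u).im + (ξ * conj η).im * (2 * normSq u / (1 + normSq ξ)) := by
    simp only [Complex.sub_im, Complex.mul_im, Complex.conj_re, Complex.conj_im,
      Complex.ofReal_re, Complex.ofReal_im]
    ring
  rw [h2, q]
  have hD : (1 + normSq ξ) ≠ 0 := ne_of_gt hd
  field_simp
  ring
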